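/- For every real y > 0: G(y) + y G′(y) = −y^{−2} G′(1/y) = ∑_{n ∈ ℤ} (1 − 2πn²y²) exp(−πn²y²) = 4π y^{−3} ∑_{n=1}^∞ n² exp(−πn²/y²). Moreover this common value equals ∫₀^y x^{−1} H(x) dx, i.e. it is the cumulative distribution function at y of the probability density x ↦ x^{−1}H(x) on (0,∞). -/

import Mathlib

open MeasureTheory

/-- `G(y) = ∑_{n ∈ ℤ} exp(−πn²y²)`. -/
noncomputable def G (y : ℝ) : ℝ := ∑' n : ℤ, Real.exp (-Real.pi * (n : ℝ) ^ 2 * y ^ 2)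

/-- `H(y) = 2y G′(y) + y² G″(y)`. -/
noncomputable def H (y : ℝ) : ℝ := 2 * y * deriv G y + y ^ 2 * deriv (deriv G) y

open Real Filter Set Topology

/-- Auxiliary series `T k y = ∑ (n²)^k e^{-π n² y²}`. -/
noncomputable def T (k : ℕ) (y : ℝ) : ℝ :=
  ∑' n : ℤ, ((n : ℝ) ^ 2) ^ k * Real.exp (-Real.pi * (n : ℝ) ^ 2 * y ^ 2)

lemma summable_T_nat (k : ℕ) {y : ℝ} (hy : 0 < y) :
    Summable (fun n : ℕ => (((n : ℤ) : ℝ) ^ 2) ^ k * Real.exp (-Real.pi * ((n : ℤ) : ℝ) ^ 2 * y ^ 2)) := by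
  have hr : ‖Real.exp (-Real.pi * y ^ 2)‖ < 1 := by
    rw [Real.norm_eq_abs, abs_of_pos (Real.exp_pos _), Real.exp_lt_one_iff]
    have := mul_pos Real.pi_pos (pow_pos hy 2)
    linarith
  refine Summable.of_nonneg_of_le (fun n => by positivity) (fun n => ?_)
    (summable_pow_mul_geometric_of_norm_lt_one (2 * k) hr)
  have h1 : Real.exp (-Real.pi * (n : ℝ) ^ 2 * y ^ 2) ≤ Real.exp (-Real.pi * y ^ 2) ^ n := by
    rw [← Real.exp_nat_mul, Real.exp_le_exp]
    have : (n : ℝ) ≤ (n : ℝ) ^ 2 := by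
      exact_mod_cast Nat.le_self_pow two_ne_zero n
    have h3 : 0 ≤ Real.pi * y ^ 2 * ((n : ℝ) ^ 2 - (n : ℝ)) :=
      mul_nonneg (by positivity) (by linarith)
    nlinarith [h3]
  have h2 : (((n : ℤ) : ℝ) ^ 2) ^ k = (n : ℝ) ^ (2 * k) := by
    push_cast
    rw [pow_mul]
  push_cast
  rw [← pow_mul] at *
  calc (n : ℝ) ^ (2 * k) * Real.exp (-Real.pi * (n : ℝ) ^ 2 * y ^ 2)
      ≤ (n : ℝ) ^ (2 * k) * Real.exp (-Real.pi * y ^ 2) ^ n :=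
        mul_le_mul_of_nonneg_left h1 (by positivity)
    _ = _ := rfl

lemma summable_T (k : ℕ) {y : ℝ} (hy : 0 < y) :
    Summable (fun n : ℤ => ((n : ℝ) ^ 2) ^ k * Real.exp (-Real.pi * (n : ℝ) ^ 2 * y ^ 2)) := by
  refine Summable.of_nat_of_neg (summable_T_nat k hy) ?_
  refine (summable_T_nat k hy).congr fun n => ?_
  push_cast
  ring_nf

lemma T_nonneg (k : ℕ) (y : ℝ) : 0 ≤ T k y :=
  tsum_nonneg fun n => by positivity

lemma hasDerivAt_term (n : ℤ) (k : ℕ) (x : ℝ) :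
    HasDerivAt (fun y : ℝ => ((n : ℝ) ^ 2) ^ k * Real.exp (-Real.pi * (n : ℝ) ^ 2 * y ^ 2))
      (((n : ℝ) ^ 2) ^ k * (Real.exp (-Real.pi * (n : ℝ) ^ 2 * x ^ 2) *
        (-Real.pi * (n : ℝ) ^ 2 * (2 * x)))) x := by
  have h : HasDerivAt (fun y : ℝ => -Real.pi * (n : ℝ) ^ 2 * y ^ 2)
      (-Real.pi * (n : ℝ) ^ 2 * (2 * x)) x := by
    have h := (hasDerivAt_pow 2 x).const_mul (-Real.pi * (n : ℝ) ^ 2)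
    exact h.congr_deriv (by norm_num)
  exact (h.exp).const_mul _

lemma hasDerivAt_T (k : ℕ) {y : ℝ} (hy : 0 < y) :
    HasDerivAt (T k) (-2 * Real.pi * y * T (k + 1) y) y := by
  have key : HasDerivAt (fun z => ∑' n : ℤ, ((n : ℝ) ^ 2) ^ k *
        Real.exp (-Real.pi * (n : ℝ) ^ 2 * z ^ 2))
      (∑' n : ℤ, ((n : ℝ) ^ 2) ^ k * (Real.exp (-Real.pi * (n : ℝ) ^ 2 * y ^ 2) *
        (-Real.pi * (n : ℝ) ^ 2 * (2 * y)))) y := by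
    have h2y : (0:ℝ) < y/2 := by linarith
    refine hasDerivAt_tsum_of_isPreconnected
      (u := fun n : ℤ => 4 * Real.pi * y * (((n : ℝ) ^ 2) ^ (k + 1) *
        Real.exp (-Real.pi * (n : ℝ) ^ 2 * (y/2) ^ 2)))
      (((summable_T (k + 1) h2y).mul_left _)) isOpen_Ioo (isPreconnected_Ioo (a := y/2) (b := 2*y))
      (fun n x _ => hasDerivAt_term n k x) (fun n x hx => ?_)
      (show y ∈ Ioo (y/2) (2*y) by constructor <;> linarith)
      (summable_T k hy) (show y ∈ Ioo (y/2) (2*y) by constructor <;> linarith)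
    obtain ⟨hx1, hx2⟩ := hx
    have hx0 : 0 < x := lt_trans h2y hx1
    have habs : ‖((n : ℝ) ^ 2) ^ k * (Real.exp (-Real.pi * (n : ℝ) ^ 2 * x ^ 2) *
        (-Real.pi * (n : ℝ) ^ 2 * (2 * x)))‖
        = ((n : ℝ) ^ 2) ^ k * (Real.exp (-Real.pi * (n : ℝ) ^ 2 * x ^ 2) *
          (Real.pi * (n : ℝ) ^ 2 * (2 * x))) := by
      rw [Real.norm_eq_abs, abs_mul, abs_mul, abs_of_nonneg (by positivity),
        abs_of_nonneg (Real.exp_pos _).le]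
      congr 1
      rw [abs_of_nonpos (by nlinarith [mul_nonneg (mul_nonneg Real.pi_pos.le (sq_nonneg ((n:ℝ)))) (by linarith : (0:ℝ) ≤ 2*x)])]
      ring
    rw [habs]
    have hexp : Real.exp (-Real.pi * (n : ℝ) ^ 2 * x ^ 2)
        ≤ Real.exp (-Real.pi * (n : ℝ) ^ 2 * (y/2) ^ 2) := by
      rw [Real.exp_le_exp]
      nlinarith [mul_nonneg (mul_nonneg Real.pi_pos.le (sq_nonneg ((n:ℝ))))
        (by nlinarith : (0:ℝ) ≤ x^2 - (y/2)^2)]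
    calc ((n : ℝ) ^ 2) ^ k * (Real.exp (-Real.pi * (n : ℝ) ^ 2 * x ^ 2) *
          (Real.pi * (n : ℝ) ^ 2 * (2 * x)))
        ≤ ((n : ℝ) ^ 2) ^ k * (Real.exp (-Real.pi * (n : ℝ) ^ 2 * (y/2) ^ 2) *
          (Real.pi * (n : ℝ) ^ 2 * (2 * (2 * y)))) := by
          have hpi := Real.pi_pos
          have hx2' : x ≤ 2 * y := hx2.le
          gcongr
      _ = 4 * Real.pi * y * (((n : ℝ) ^ 2) ^ (k + 1) *
          Real.exp (-Real.pi * (n : ℝ) ^ 2 * (y/2) ^ 2)) := by ring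
  have hval : (∑' n : ℤ, ((n : ℝ) ^ 2) ^ k * (Real.exp (-Real.pi * (n : ℝ) ^ 2 * y ^ 2) *
      (-Real.pi * (n : ℝ) ^ 2 * (2 * y)))) = -2 * Real.pi * y * T (k + 1) y := by
    rw [T, ← tsum_mul_left]
    exact tsum_congr fun n => by ring
  rw [← hval]
  exact key

lemma G_eq_T0 : G = T 0 := by
  funext y
  simp [G, T]

lemma hasDerivAt_G {y : ℝ} (hy : 0 < y) :
    HasDerivAt G (-2 * Real.pi * y * T 1 y) y := by
  rw [G_eq_T0]
  exact hasDerivAt_T 0 hy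

lemma deriv_G {y : ℝ} (hy : 0 < y) : deriv G y = -2 * Real.pi * y * T 1 y :=
  (hasDerivAt_G hy).deriv

lemma hasDerivAt_D1 {y : ℝ} (hy : 0 < y) :
    HasDerivAt (fun x => -2 * Real.pi * x * T 1 x)
      (-2 * Real.pi * T 1 y + 4 * Real.pi ^ 2 * y ^ 2 * T 2 y) y := by
  have h1 : HasDerivAt (fun x : ℝ => -2 * Real.pi * x) (-2 * Real.pi) y := by
    simpa using (hasDerivAt_id y).const_mul (-2 * Real.pi)
  have := h1.mul (hasDerivAt_T 1 hy)
  exact this.congr_deriv (by ring)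

lemma deriv2_G {y : ℝ} (hy : 0 < y) :
    deriv (deriv G) y = -2 * Real.pi * T 1 y + 4 * Real.pi ^ 2 * y ^ 2 * T 2 y := by
  have hev : deriv G =ᶠ[nhds y] (fun x => -2 * Real.pi * x * T 1 x) := by
    filter_upwards [Ioi_mem_nhds hy] with x hx using deriv_G hx
  rw [hev.deriv_eq]
  exact (hasDerivAt_D1 hy).deriv

lemma funct_eq {y : ℝ} (hy : 0 < y) : y * G y = G (1/y) := by
  have h := Real.tsum_exp_neg_mul_int_sq (a := y^2) (by positivity)
  have h2 : ((y^2 : ℝ)) ^ ((1:ℝ)/2) = y := by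
    rw [← Real.rpow_natCast y 2, ← Real.rpow_mul hy.le]
    norm_num
  have e1 : G y = ∑' n : ℤ, Real.exp (-Real.pi * y^2 * (n : ℝ)^2) :=
    tsum_congr fun n => by ring_nf
  have e2 : G (1/y) = ∑' n : ℤ, Real.exp (-Real.pi / y^2 * (n : ℝ)^2) :=
    tsum_congr fun n => by
      congr 1
      field_simp
  rw [e1, e2, h, h2]
  field_simp

lemma key_eq {y : ℝ} (hy : 0 < y) :
    G y + y * deriv G y = (-2 * Real.pi * (1/y) * T 1 (1/y)) * (-(y^2)⁻¹) := by
  have hiy : 0 < 1/y := by positivity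
  have hA : HasDerivAt (fun x => x * G x) (G y + y * (-2 * Real.pi * y * T 1 y)) y := by
    have := (hasDerivAt_id y).mul (hasDerivAt_G hy)
    exact this.congr_deriv (by simp only [id_eq]; ring)
  have hinv : HasDerivAt (fun x : ℝ => 1/x) (-(y^2)⁻¹) y := by
    simpa [one_div] using hasDerivAt_inv hy.ne'
  have hB : HasDerivAt (fun x => G (1/x)) ((-2 * Real.pi * (1/y) * T 1 (1/y)) * (-(y^2)⁻¹)) y := by
    exact (hasDerivAt_G hiy).comp y hinv
  have heq : (fun x => G (1/x)) =ᶠ[nhds y] (fun x => x * G x) := by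
    filter_upwards [Ioi_mem_nhds hy] with x hx using (funct_eq hx).symm
  have := (hA.congr_of_eventuallyEq heq).unique hB
  rw [deriv_G hy]
  linarith [this]


lemma tendsto_pow_mul_T (k j : ℕ) (hj : 1 ≤ j) :
    Filter.Tendsto (fun t : ℝ => t ^ k * T j t) atTop (nhds 0) := by
  have hlim : Filter.Tendsto
      (fun t : ℝ => (Real.exp Real.pi * T j 1) * ((t ^ 2) ^ k * Real.exp (-(t ^ 2))))
      atTop (nhds 0) := by
    have h1 : Filter.Tendsto (fun s : ℝ => s ^ k * Real.exp (-s)) atTop (nhds 0) :=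
      tendsto_pow_mul_exp_neg_atTop_nhds_zero k
    have h2 : Filter.Tendsto (fun t : ℝ => t ^ 2) atTop atTop :=
      tendsto_pow_atTop two_ne_zero
    have := (h1.comp h2).const_mul (Real.exp Real.pi * T j 1)
    simpa [Function.comp] using this
  apply squeeze_zero' ?_ ?_ hlim
  · filter_upwards [eventually_ge_atTop (1:ℝ)] with t ht
    exact mul_nonneg (by positivity) (T_nonneg j t)
  · filter_upwards [eventually_ge_atTop (1:ℝ)] with t ht
    have ht0 : (0:ℝ) < t := by linarith
    have ht2 : (1:ℝ) ≤ t ^ 2 := by nlinarith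
    have hpi1 : (1:ℝ) ≤ Real.pi := by linarith [Real.pi_gt_three]
    have hT : T j t ≤ Real.exp Real.pi * Real.exp (-(t ^ 2)) * T j 1 := by
      have h1 : T j t ≤ ∑' n : ℤ, (Real.exp Real.pi * Real.exp (-(t ^ 2))) *
          (((n : ℝ) ^ 2) ^ j * Real.exp (-Real.pi * (n : ℝ) ^ 2 * 1 ^ 2)) := by
        refine Summable.tsum_le_tsum (fun n => ?_) (summable_T j ht0)
          ((summable_T j one_pos).mul_left _)
        rcases eq_or_ne n 0 with rfl | hn
        · push_cast
          rw [zero_pow two_ne_zero, zero_pow (by omega : j ≠ 0)]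
          simp
        · have hn1 : (1:ℝ) ≤ (n : ℝ) ^ 2 := by
            have h0 : (1:ℤ) ≤ n ^ 2 := by nlinarith [Int.one_le_abs hn, sq_abs n]
            exact_mod_cast h0
          have hexp : Real.exp (-Real.pi * (n : ℝ) ^ 2 * t ^ 2)
              ≤ Real.exp Real.pi * (Real.exp (-(t ^ 2)) * Real.exp (-Real.pi * (n : ℝ) ^ 2 * 1 ^ 2)) := by
            rw [← Real.exp_add, ← Real.exp_add, Real.exp_le_exp]
            nlinarith [mul_nonneg (sub_nonneg.2 hn1) (sub_nonneg.2 ht2),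
              mul_nonneg (sub_nonneg.2 hpi1) (sub_nonneg.2 ht2)]
          calc ((n : ℝ) ^ 2) ^ j * Real.exp (-Real.pi * (n : ℝ) ^ 2 * t ^ 2)
              ≤ ((n : ℝ) ^ 2) ^ j * (Real.exp Real.pi * (Real.exp (-(t ^ 2)) *
                Real.exp (-Real.pi * (n : ℝ) ^ 2 * 1 ^ 2))) :=
                mul_le_mul_of_nonneg_left hexp (by positivity)
            _ = _ := by ring
      rw [tsum_mul_left] at h1
      calc T j t ≤ (Real.exp Real.pi * Real.exp (-(t ^ 2))) * T j 1 := h1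
        _ = _ := by ring
    have hpow : t ^ k ≤ (t ^ 2) ^ k := by
      rw [← pow_mul]
      exact pow_le_pow_right₀ (by linarith) (by omega)
    calc t ^ k * T j t ≤ t ^ k * (Real.exp Real.pi * Real.exp (-(t ^ 2)) * T j 1) :=
          mul_le_mul_of_nonneg_left hT (by positivity)
      _ ≤ (t ^ 2) ^ k * (Real.exp Real.pi * Real.exp (-(t ^ 2)) * T j 1) := by
          have h0 : 0 ≤ Real.exp Real.pi * Real.exp (-(t ^ 2)) * T j 1 := by
            have := T_nonneg j 1
            positivity
          exact mul_le_mul_of_nonneg_right hpow h0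
      _ = (Real.exp Real.pi * T j 1) * ((t ^ 2) ^ k * Real.exp (-(t ^ 2))) := by ring

lemma F_repr {x : ℝ} (hx : 0 < x) :
    G x + x * deriv G x = 2 * Real.pi * ((x⁻¹) ^ 3 * T 1 x⁻¹) := by
  rw [key_eq hx]
  simp only [one_div]
  ring

lemma hasDerivAt_Phi {x : ℝ} (hx : 0 < x) :
    HasDerivAt (fun x : ℝ => 2 * Real.pi * ((x⁻¹) ^ 3 * T 1 x⁻¹))
      (-6 * Real.pi * (x⁻¹) ^ 4 * T 1 x⁻¹ + 4 * Real.pi ^ 2 * (x⁻¹) ^ 6 * T 2 x⁻¹) x := by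
  have hinv : HasDerivAt (fun x : ℝ => x⁻¹) (-(x ^ 2)⁻¹) x := hasDerivAt_inv hx.ne'
  have hcube := hinv.pow 3
  have hT1 : HasDerivAt (fun x : ℝ => T 1 x⁻¹)
      ((-2 * Real.pi * x⁻¹ * T 2 x⁻¹) * (-(x ^ 2)⁻¹)) x :=
    (hasDerivAt_T 1 (inv_pos.mpr hx)).comp x hinv
  have := (hcube.mul hT1).const_mul (2 * Real.pi)
  exact this.congr_deriv (by simp only [Pi.pow_apply]; push_cast; ring)

lemma Hval {x : ℝ} (hx : 0 < x) :
    x⁻¹ * H x = -6 * Real.pi * x * T 1 x + 4 * Real.pi ^ 2 * x ^ 3 * T 2 x := by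
  rw [H, deriv_G hx, deriv2_G hx]
  field_simp
  ring

lemma hasDerivAt_F {x : ℝ} (hx : 0 < x) :
    HasDerivAt (fun x => G x + x * deriv G x) (x⁻¹ * H x) x := by
  have h1 : HasDerivAt (fun x => G x + x * (-2 * Real.pi * x * T 1 x))
      (-6 * Real.pi * x * T 1 x + 4 * Real.pi ^ 2 * x ^ 3 * T 2 x) x := by
    have := (hasDerivAt_G hx).add ((hasDerivAt_id x).mul (hasDerivAt_D1 hx))
    exact this.congr_deriv (by simp only [id_eq]; ring)
  rw [Hval hx]
  refine h1.congr_of_eventuallyEq ?_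
  filter_upwards [Ioi_mem_nhds hx] with z hz
  rw [deriv_G hz]

lemma Hval2 {x : ℝ} (hx : 0 < x) :
    x⁻¹ * H x = -6 * Real.pi * (x⁻¹) ^ 4 * T 1 x⁻¹ + 4 * Real.pi ^ 2 * (x⁻¹) ^ 6 * T 2 x⁻¹ := by
  refine (hasDerivAt_F hx).unique ?_
  refine (hasDerivAt_Phi hx).congr_of_eventuallyEq ?_
  filter_upwards [Ioi_mem_nhds hx] with z hz
  exact F_repr hz

lemma tendsto_F_zero :
    Filter.Tendsto (fun x => G x + x * deriv G x) (nhdsWithin 0 (Ioi (0:ℝ))) (nhds 0) := by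
  have h1 : Filter.Tendsto (fun x : ℝ => x⁻¹) (nhdsWithin 0 (Ioi (0:ℝ))) atTop :=
    tendsto_inv_nhdsGT_zero
  have h2 := ((tendsto_pow_mul_T 3 1 le_rfl).comp h1).const_mul (2 * Real.pi)
  rw [mul_zero] at h2
  refine h2.congr' ?_
  filter_upwards [self_mem_nhdsWithin] with x hx
  exact (F_repr hx).symm

lemma tendsto_f'_zero :
    Filter.Tendsto (fun x : ℝ => x⁻¹ * H x) (nhdsWithin 0 (Ioi (0:ℝ))) (nhds 0) := by
  have h1 : Filter.Tendsto (fun x : ℝ => x⁻¹) (nhdsWithin 0 (Ioi (0:ℝ))) atTop :=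
    tendsto_inv_nhdsGT_zero
  have h2 := ((tendsto_pow_mul_T 4 1 le_rfl).comp h1).const_mul (-6 * Real.pi)
  have h3 := ((tendsto_pow_mul_T 6 2 one_le_two).comp h1).const_mul (4 * Real.pi ^ 2)
  have h4 := h2.add h3
  rw [mul_zero, mul_zero, add_zero] at h4
  refine h4.congr' ?_
  filter_upwards [self_mem_nhdsWithin] with x hx
  simp only [Function.comp]
  rw [Hval2 hx]
  ring

theorem cdf_of_H (y : ℝ) (hy : 0 < y) :
    G y + y * deriv G y = -(1 / y ^ 2) * deriv G (1 / y) ∧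
    G y + y * deriv G y
      = ∑' n : ℤ, (1 - 2 * Real.pi * (n : ℝ) ^ 2 * y ^ 2) *
          Real.exp (-Real.pi * (n : ℝ) ^ 2 * y ^ 2) ∧
    G y + y * deriv G y
      = 4 * Real.pi / y ^ 3 * ∑' n : ℕ, ((n : ℝ) + 1) ^ 2 *
          Real.exp (-Real.pi * ((n : ℝ) + 1) ^ 2 / y ^ 2) ∧
    G y + y * deriv G y = ∫ x in Set.Ioo (0 : ℝ) y, x⁻¹ * H x := by
  have hiy : 0 < 1/y := by positivity
  refine ⟨?_, ?_, ?_, ?_⟩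
  · rw [key_eq hy, deriv_G hiy]
    ring
  · -- second equality
    have hs0 : Summable (fun n : ℤ => Real.exp (-Real.pi * (n:ℝ) ^ 2 * y ^ 2)) := by
      simpa using summable_T 0 hy
    have hs1 : Summable (fun n : ℤ =>
        (-2 * Real.pi * y ^ 2) * ((n:ℝ) ^ 2 * Real.exp (-Real.pi * (n:ℝ) ^ 2 * y ^ 2))) := by
      apply Summable.mul_left
      simpa using summable_T 1 hy
    have hT1 : T 1 y = ∑' n : ℤ, (n:ℝ) ^ 2 * Real.exp (-Real.pi * (n:ℝ) ^ 2 * y ^ 2) := by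
      rw [T]
      exact tsum_congr fun n => by rw [pow_one]
    calc G y + y * deriv G y
        = G y + (-2 * Real.pi * y ^ 2) * T 1 y := by rw [deriv_G hy]; ring
      _ = ∑' n : ℤ, (Real.exp (-Real.pi * (n:ℝ) ^ 2 * y ^ 2) +
          (-2 * Real.pi * y ^ 2) * ((n:ℝ) ^ 2 * Real.exp (-Real.pi * (n:ℝ) ^ 2 * y ^ 2))) := by
          rw [G, hT1, ← tsum_mul_left]
          exact (Summable.tsum_add hs0 hs1).symm
      _ = _ := tsum_congr fun n => by ring
  · -- third equality
    have hsummZ := summable_T 1 hiy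
    have hi1 : Function.Injective (fun n : ℕ => (n : ℤ) + 1) := fun a b h => by
      simp only [add_left_inj, Nat.cast_inj] at h
      exact h
    have hi2 : Function.Injective (fun n : ℕ => -((n : ℤ) + 1)) := fun a b h => by
      simp only [neg_inj, add_left_inj, Nat.cast_inj] at h
      exact h
    have hinj1 := hsummZ.comp_injective hi1
    have hinj2 := hsummZ.comp_injective hi2
    have key2 := tsum_of_add_one_of_neg_add_one
      (f := fun n : ℤ => ((n:ℝ) ^ 2) ^ 1 * Real.exp (-Real.pi * (n:ℝ) ^ 2 * (1/y) ^ 2))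
      hinj1 hinj2
    have hsplit : T 1 (1/y) = 2 * ∑' n : ℕ, ((n:ℝ) + 1) ^ 2 *
        Real.exp (-Real.pi * ((n:ℝ) + 1) ^ 2 / y ^ 2) := by
      rw [T, key2]
      have e1 : (∑' n : ℕ, ((((n : ℤ) + 1 : ℤ):ℝ) ^ 2) ^ 1 *
          Real.exp (-Real.pi * (((n : ℤ) + 1 : ℤ):ℝ) ^ 2 * (1/y) ^ 2))
          = ∑' n : ℕ, ((n:ℝ) + 1) ^ 2 * Real.exp (-Real.pi * ((n:ℝ) + 1) ^ 2 / y ^ 2) := by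
        refine tsum_congr fun n => ?_
        push_cast
        rw [pow_one]
        congr 1
        field_simp
      have e2 : (∑' n : ℕ, (((-((n : ℤ) + 1) : ℤ):ℝ) ^ 2) ^ 1 *
          Real.exp (-Real.pi * ((-((n : ℤ) + 1) : ℤ):ℝ) ^ 2 * (1/y) ^ 2))
          = ∑' n : ℕ, ((n:ℝ) + 1) ^ 2 * Real.exp (-Real.pi * ((n:ℝ) + 1) ^ 2 / y ^ 2) := by
        refine tsum_congr fun n => ?_
        push_cast
        rw [pow_one, neg_pow, Even.neg_one_pow even_two, one_mul]
        congr 1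
        field_simp
      rw [e1, e2]
      norm_num
      ring
    rw [key_eq hy, hsplit]
    ring
  · -- the integral
    have hmeasH : Measurable H := by
      unfold H
      exact ((measurable_const.mul measurable_id).mul (measurable_deriv G)).add
        ((measurable_id.pow_const 2).mul (measurable_deriv (deriv G)))
    have hmeas : AEStronglyMeasurable (fun x : ℝ => x⁻¹ * H x) volume :=
      (measurable_inv.mul hmeasH).aestronglyMeasurable
    have hb : ∀ᶠ x in nhdsWithin 0 (Ioi (0:ℝ)), ‖x⁻¹ * H x‖ ≤ 1 := by
      have hn : Filter.Tendsto (fun x : ℝ => ‖x⁻¹ * H x‖) (nhdsWithin 0 (Ioi (0:ℝ))) (nhds 0) := by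
        simpa using tendsto_f'_zero.norm
      exact hn.eventually (eventually_le_nhds one_pos)
    obtain ⟨ε, hε, hsub⟩ := mem_nhdsGT_iff_exists_Ioo_subset.1 hb
    have hε0 : (0:ℝ) < ε := hε
    set b := min (ε/2) y with hbdef
    have hb0 : 0 < b := lt_min (by linarith) hy
    have hby : b ≤ y := min_le_right _ _
    have hbe : b < ε := lt_of_le_of_lt (min_le_left _ _) (by linarith)
    have hInt : IntervalIntegrable (fun x : ℝ => x⁻¹ * H x) volume 0 y := by
      rw [intervalIntegrable_iff_integrableOn_Ioc_of_le hy.le]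
      rw [← Ioc_union_Ioc_eq_Ioc hb0.le hby]
      refine IntegrableOn.union ?_ ?_
      · refine Measure.integrableOn_of_bounded (M := 1) measure_Ioc_lt_top.ne hmeas ?_
        rw [ae_restrict_iff' measurableSet_Ioc]
        filter_upwards with x hx
        exact hsub ⟨hx.1, lt_of_le_of_lt hx.2 hbe⟩
      · refine (ContinuousOn.integrableOn_Icc ?_).mono_set Ioc_subset_Icc_self
        refine ContinuousOn.congr ?_ (fun z hz => Hval (lt_of_lt_of_le hb0 hz.1))
        intro z hz
        have hz0 : 0 < z := lt_of_lt_of_le hb0 hz.1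
        have c1 : ContinuousAt (T 1) z := (hasDerivAt_T 1 hz0).continuousAt
        have c2 : ContinuousAt (T 2) z := (hasDerivAt_T 2 hz0).continuousAt
        exact (((continuousAt_const.mul continuousAt_id).mul c1).add
          ((continuousAt_const.mul (continuousAt_id.pow 3)).mul c2)).continuousWithinAt
    have hderiv : ∀ x ∈ Ioo (0:ℝ) y,
        HasDerivAt (fun x => G x + x * deriv G x) (x⁻¹ * H x) x :=
      fun x hx => hasDerivAt_F hx.1
    have htop : Filter.Tendsto (fun x => G x + x * deriv G x) (nhdsWithin y (Iio y))
        (nhds (G y + y * deriv G y)) :=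
      ((hasDerivAt_F hy).continuousAt.continuousWithinAt : ContinuousWithinAt _ (Iio y) y)
    have key := intervalIntegral.integral_eq_sub_of_hasDerivAt_of_tendsto hy hderiv hInt
      tendsto_F_zero htop
    rw [intervalIntegral.integral_of_le hy.le, integral_Ioc_eq_integral_Ioo] at key
    rw [key]
    ring
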